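/- There exists a real n₁ such that for every real x ≥ n₁ the equation x = (1/2)·(π n₀ e^{(L − log N)/2} − k/2 + 1)·L has exactly one solution L > 0. -/
import Mathlib


/-- For all sufficiently large real `x`, the saddle-point equation
`x = (1/2)(π n₀ e^{(L − log N)/2} − k/2 + 1) L` has exactly one positive solution `L`. -/
theorem saddle_point_equation_unique_solution
    (N : ℕ) (hN : 1 ≤ N)
    (k : ℚ) (hk : 0 < k)
    (n₀ : ℕ) (hn₀ : 1 ≤ n₀) :
    ∃ n₁ : ℝ, ∀ x : ℝ, n₁ ≤ x →
      ∃! L : ℝ, 0 < L ∧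
        x = 1 / 2 * (Real.pi * n₀ * Real.exp ((L - Real.log N) / 2) - (k : ℝ) / 2 + 1) * L := by
  have hk' : (0:ℝ) < (k:ℝ) := by exact_mod_cast hk
  have hn₀' : (1:ℝ) ≤ (n₀:ℝ) := by exact_mod_cast hn₀
  have hc : (0:ℝ) < Real.pi * n₀ := by nlinarith [Real.pi_pos]
  set f : ℝ → ℝ := fun L =>
    1 / 2 * (Real.pi * n₀ * Real.exp ((L - Real.log N) / 2) - (k : ℝ) / 2 + 1) * L with hfdef
  have hfc : Continuous f := by fun_prop
  set L₀ : ℝ := max 1 (Real.log N + (k:ℝ) / (Real.pi * n₀)) with hL₀def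
  have hL₀1 : (1:ℝ) ≤ L₀ := le_max_left _ _
  -- on [L₀, ∞), the bracket is ≥ 1
  have hg1 : ∀ L : ℝ, L₀ ≤ L →
      1 ≤ Real.pi * n₀ * Real.exp ((L - Real.log N) / 2) - (k : ℝ) / 2 + 1 := by
    intro L hL
    have h5 : Real.log N + (k:ℝ) / (Real.pi * n₀) ≤ L :=
      le_trans (le_max_right _ _) hL
    have h6 : (k:ℝ) ≤ (L - Real.log N) * (Real.pi * n₀) := by
      have h7 : (k:ℝ) / (Real.pi * n₀) ≤ L - Real.log N := by linarith
      rw [div_le_iff₀ hc] at h7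
      linarith
    have h4 := Real.add_one_le_exp ((L - Real.log N) / 2)
    nlinarith [mul_le_mul_of_nonneg_left h4 hc.le]
  -- strict monotonicity on [L₀, ∞)
  have hmono : ∀ a b : ℝ, L₀ ≤ a → a < b → f a < f b := by
    intro a b ha hab
    have hga := hg1 a ha
    have hgb := hg1 b (le_of_lt (lt_of_le_of_lt ha hab))
    have hea : Real.exp ((a - Real.log N) / 2) < Real.exp ((b - Real.log N) / 2) :=
      Real.exp_lt_exp.mpr (by linarith)
    have ha1 : (1:ℝ) ≤ a := le_trans hL₀1 ha
    show 1 / 2 * (Real.pi * n₀ * Real.exp ((a - Real.log N) / 2) - (k : ℝ) / 2 + 1) * a <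
      1 / 2 * (Real.pi * n₀ * Real.exp ((b - Real.log N) / 2) - (k : ℝ) / 2 + 1) * b
    nlinarith [mul_lt_mul_of_pos_left hea hc]
  -- lower bound f L ≥ L / 2 on [L₀, ∞)
  have hflb : ∀ L : ℝ, L₀ ≤ L → L / 2 ≤ f L := by
    intro L hL
    have hg := hg1 L hL
    have hL1 : (1:ℝ) ≤ L := le_trans hL₀1 hL
    show L / 2 ≤ 1 / 2 * (Real.pi * n₀ * Real.exp ((L - Real.log N) / 2) - (k : ℝ) / 2 + 1) * L
    nlinarith
  -- max of f on [0, L₀]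
  obtain ⟨z, hz, hzmax⟩ := isCompact_Icc.exists_isMaxOn
    (Set.nonempty_Icc.mpr (by linarith : (0:ℝ) ≤ L₀)) hfc.continuousOn
  refine ⟨f z + 1, fun x hx => ?_⟩
  have hfL₀ : f L₀ ≤ f z := hzmax (Set.mem_Icc.mpr ⟨by linarith, le_refl _⟩)
  have hfL₀x : f L₀ < x := by linarith
  set R : ℝ := max L₀ (2 * x) with hRdef
  have hL₀R : L₀ ≤ R := le_max_left _ _
  have hxfR : x ≤ f R := by
    have := hflb R hL₀R
    have h2 : 2 * x ≤ R := le_max_right _ _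
    linarith
  obtain ⟨L, hLmem, hLx⟩ := intermediate_value_Icc hL₀R hfc.continuousOn
    (Set.mem_Icc.mpr ⟨le_of_lt hfL₀x, hxfR⟩)
  have hLpos : 0 < L := lt_of_lt_of_le (by linarith : (0:ℝ) < L₀) hLmem.1
  refine ⟨L, ⟨hLpos, hLx.symm⟩, ?_⟩
  rintro L' ⟨hL'pos, hxeq⟩
  have hfL' : f L' = x := hxeq.symm
  have hL'ge : L₀ ≤ L' := by
    by_contra h
    push_neg at h
    have : f L' ≤ f z := hzmax (Set.mem_Icc.mpr ⟨hL'pos.le, h.le⟩)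
    linarith
  rcases lt_trichotomy L' L with h | h | h
  · exact absurd (hmono L' L hL'ge h) (by rw [hfL', hLx]; exact lt_irrefl x)
  · exact h
  · exact absurd (hmono L L' hLmem.1 h) (by rw [hfL', hLx]; exact lt_irrefl x)
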